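/- Let n, m, m' ∈ ℕ, let ℓ₁,…,ℓ_m be linearly independent linear forms in ℝ[X₁,…,Xₙ]₁ and λ₁,…,λ_m ∈ ℝ \ {0}, and let l₁,…,l_{m'} be linear forms and ρ₁,…,ρ_{m'} ∈ ℝ \ {0}. If Σ_{i=1}^m λᵢ ℓᵢ^d = Σ_{j=1}^{m'} ρⱼ lⱼ^d for both d = 2 and d = 3, then m' ≥ m; moreover, if m' = m, then the multiset {(l₁,ρ₁),…,(l_m,ρ_m)} equals {(ℓ₁,λ₁),…,(ℓ_m,λ_m)}. -/

import Mathlib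

open MvPolynomial Module Submodule

lemma aux_degree_one {σ : Type*} {d : σ →₀ ℕ} (h : Finsupp.degree d = 1) :
    ∃ k, d = Finsupp.single k 1 := by
  classical
  obtain ⟨k, hk⟩ : d.support.Nonempty := by
    rw [Finset.nonempty_iff_ne_empty]
    intro hs
    rw [Finsupp.support_eq_empty.mp hs] at h
    simp at h
  have hdk : d k ≠ 0 := Finsupp.mem_support_iff.mp hk
  have hsum : d k + ∑ i ∈ d.support.erase k, d i = 1 := by
    rw [Finset.add_sum_erase _ _ hk]; exact h
  have h1 : d k = 1 := by omega
  have h2 : ∑ i ∈ d.support.erase k, d i = 0 := by omega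
  refine ⟨k, ?_⟩
  ext i
  by_cases hik : i = k
  · subst hik; simp [h1]
  · have hz : d i = 0 := by
      by_cases hi : i ∈ d.support
      · exact (Finset.sum_eq_zero_iff).mp h2 i (Finset.mem_erase.mpr ⟨hik, hi⟩)
      · exact Finsupp.notMem_support_iff.mp hi
    simp [hz, Finsupp.single_apply, Ne.symm hik]

lemma aux_hom1_repr {n : ℕ} {p : MvPolynomial (Fin n) ℝ} (hp : p.IsHomogeneous 1) :
    p = ∑ k, MvPolynomial.C (coeff (Finsupp.single k 1) p) * X k := by
  apply MvPolynomial.ext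
  intro d
  rw [coeff_sum]
  simp only [coeff_C_mul, coeff_X']
  by_cases hd : ∃ k, d = Finsupp.single k 1
  · obtain ⟨k, rfl⟩ := hd
    rw [Finset.sum_eq_single k]
    · simp
    · intro b _ hb
      rw [if_neg, mul_zero]
      intro hcontra
      exact hb (Finsupp.single_left_injective one_ne_zero hcontra)
    · simp
  · push_neg at hd
    have hc : coeff d p = 0 := by
      apply hp.coeff_eq_zero
      intro hdeg
      obtain ⟨k, hk⟩ := aux_degree_one hdeg
      exact hd k hk
    rw [hc]
    symm
    apply Finset.sum_eq_zero
    intro k _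
    rw [if_neg, mul_zero]
    intro hcontra
    exact hd k hcontra.symm

lemma aux_hom1_eval {n : ℕ} {p : MvPolynomial (Fin n) ℝ} (hp : p.IsHomogeneous 1)
    (x : Fin n → ℝ) : eval x p = ∑ k, coeff (Finsupp.single k 1) p * x k := by
  conv_lhs => rw [aux_hom1_repr hp]
  simp

lemma aux_hom1_comb3 {n : ℕ} {p : MvPolynomial (Fin n) ℝ} (hp : p.IsHomogeneous 1)
    (x y z : Fin n → ℝ) (s t : ℝ) :
    eval (x + s • y + t • z) p = eval x p + s * eval y p + t * eval z p := by
  simp only [aux_hom1_eval hp, Pi.add_apply, Pi.smul_apply, smul_eq_mul, Finset.mul_sum,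
    ← Finset.sum_add_distrib]
  exact Finset.sum_congr rfl fun k _ => by ring

lemma aux_hom1_comb2 {n : ℕ} {p : MvPolynomial (Fin n) ℝ} (hp : p.IsHomogeneous 1)
    (x y : Fin n → ℝ) (s : ℝ) :
    eval (x + s • y) p = eval x p + s * eval y p := by
  simp only [aux_hom1_eval hp, Pi.add_apply, Pi.smul_apply, smul_eq_mul, Finset.mul_sum,
    ← Finset.sum_add_distrib]
  exact Finset.sum_congr rfl fun k _ => by ring


lemma aux_dual_family {N m : ℕ} (f : Fin m → ((Fin N → ℝ) →ₗ[ℝ] ℝ))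
    (hf : LinearIndependent ℝ f) :
    ∃ v : Fin m → (Fin N → ℝ), ∀ i k, f i (v k) = if i = k then 1 else 0 := by
  have hsurj : Function.Surjective (LinearMap.pi f : (Fin N → ℝ) →ₗ[ℝ] (Fin m → ℝ)) := by
    rw [← LinearMap.range_eq_top]
    by_contra hne
    obtain ⟨x, hx⟩ : ∃ x, x ∉ LinearMap.range (LinearMap.pi f) := by
      by_contra h; push_neg at h; exact hne (Submodule.eq_top_iff'.mpr h)
    obtain ⟨g, hg0, hgmap⟩ := Submodule.exists_dual_map_eq_bot_of_notMem hx inferInstance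
    have hgr : ∀ u, g (LinearMap.pi f u) = 0 := by
      intro u
      have hmem : g (LinearMap.pi f u) ∈ Submodule.map g (LinearMap.range (LinearMap.pi f)) :=
        Submodule.mem_map_of_mem (LinearMap.mem_range_self _ u)
      rw [hgmap] at hmem
      simpa using hmem
    set e : Fin m → (Fin m → ℝ) := fun i => fun j => if i = j then 1 else 0 with he
    have hexp : ∀ u, ∑ i, g (e i) * f i u = 0 := by
      intro u
      have h1 : (LinearMap.pi f u : Fin m → ℝ) = ∑ i, (f i u) • e i := by
        rw [pi_eq_sum_univ (LinearMap.pi f u)]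
        rfl
      have := hgr u
      rw [h1, map_sum] at this
      simpa [mul_comm] using this
    have hzero : ∀ i, g (e i) = 0 := by
      have hrel : ∑ i ∈ Finset.univ, g (e i) • f i = 0 := by
        apply LinearMap.ext
        intro u
        simpa [smul_eq_mul] using hexp u
      intro i
      exact linearIndependent_iff'.mp hf Finset.univ _ hrel i (Finset.mem_univ i)
    apply hg0
    rw [pi_eq_sum_univ x, map_sum]
    apply Finset.sum_eq_zero
    intro i _
    rw [map_smul, hzero i, smul_zero]
  choose v hv using fun k => hsurj (Pi.single k 1)
  refine ⟨v, fun i k => ?_⟩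
  have := congrFun (hv k) i
  simpa [LinearMap.pi_apply, Pi.single_apply] using this

lemma aux_core {N m m' : ℕ} (L : Fin m → ((Fin N → ℝ) →ₗ[ℝ] ℝ)) (lam : Fin m → ℝ)
    (hLi : LinearIndependent ℝ L) (hlam : ∀ i, lam i ≠ 0)
    (L' : Fin m' → ((Fin N → ℝ) →ₗ[ℝ] ℝ)) (ρ : Fin m' → ℝ) (hρ : ∀ j, ρ j ≠ 0)
    (hB : ∀ x y, ∑ i, lam i * (L i x * L i y) = ∑ j, ρ j * (L' j x * L' j y))
    (hQ : ∀ x y z, ∑ i, lam i * (L i x * L i y * L i z)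
        = ∑ j, ρ j * (L' j x * L' j y * L' j z)) :
    m ≤ m' ∧ (m' = m → ∃ σ : Fin m' → Fin m, Function.Bijective σ ∧
      ∀ j, L' j = L (σ j) ∧ ρ j = lam (σ j)) := by
  obtain ⟨v, hv⟩ := aux_dual_family L hLi
  -- each L k is a combination of the L' j
  have hspan : ∀ k, L k = ∑ j, ((lam k)⁻¹ * (ρ j * (L' j (v k) * L' j (v k)))) • L' j := by
    intro k
    apply LinearMap.ext; intro y
    have h := hQ (v k) (v k) y
    have hL : ∑ i, lam i * (L i (v k) * L i (v k) * L i y) = lam k * L k y := by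
      rw [Finset.sum_eq_single k]
      · simp [hv]
      · intro b _ hb; simp [hv, hb]
      · simp
    rw [hL] at h
    simp only [LinearMap.sum_apply, LinearMap.smul_apply, smul_eq_mul]
    have hsum : ∑ j, (lam k)⁻¹ * (ρ j * (L' j (v k) * L' j (v k))) * L' j y
        = (lam k)⁻¹ * ∑ j, ρ j * (L' j (v k) * L' j (v k) * L' j y) := by
      rw [Finset.mul_sum]
      exact Finset.sum_congr rfl fun j _ => by ring
    rw [hsum, ← h, inv_mul_cancel_left₀ (hlam k)]
  have hWfd : FiniteDimensional ℝ (span ℝ (Set.range L')) :=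
    FiniteDimensional.span_of_finite ℝ (Set.finite_range L')
  have hle : span ℝ (Set.range L) ≤ span ℝ (Set.range L') := by
    rw [span_le]
    rintro _ ⟨k, rfl⟩
    rw [hspan k]
    exact Submodule.sum_mem _ fun j _ => Submodule.smul_mem _ _ (subset_span ⟨j, rfl⟩)
  have hfr : finrank ℝ (span ℝ (Set.range L)) = m := by
    simpa using finrank_span_eq_card hLi
  have hfr'le : finrank ℝ (span ℝ (Set.range L')) ≤ m' := by
    simpa [Set.finrank] using finrank_range_le_card (R := ℝ) L'
  have hineq : m ≤ m' := by
    have h1 := Submodule.finrank_mono hle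
    omega
  refine ⟨hineq, ?_⟩
  intro hm
  subst hm
  -- L' is linearly independent
  have hfr' : finrank ℝ (span ℝ (Set.range L')) = m' := by
    have h1 := Submodule.finrank_mono hle
    omega
  have hL'i : LinearIndependent ℝ L' := by
    rw [linearIndependent_iff_card_eq_finrank_span]
    simpa [Set.finrank] using hfr'.symm
  obtain ⟨w, hw⟩ := aux_dual_family L' hL'i
  -- basic evaluations
  have e1 : ∀ i j, lam i * L i (w j) = ρ j * L' j (v i) := by
    intro i j
    have hLside : ∑ i', lam i' * (L i' (v i) * L i' (w j)) = lam i * L i (w j) := by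
      rw [Finset.sum_eq_single i]
      · simp [hv]
      · intro b _ hb; simp [hv, hb]
      · simp
    have hRside : ∑ j', ρ j' * (L' j' (v i) * L' j' (w j)) = ρ j * L' j (v i) := by
      rw [Finset.sum_eq_single j]
      · simp [hw]
      · intro b _ hb; simp [hw, hb]
      · simp
    rw [← hLside, ← hRside]
    exact hB (v i) (w j)
  have e2 : ∀ i j, lam i * L i (w j) = ρ j * (L' j (v i) * L' j (v i)) := by
    intro i j
    have hLside : ∑ i', lam i' * (L i' (v i) * L i' (v i) * L i' (w j))
        = lam i * L i (w j) := by
      rw [Finset.sum_eq_single i]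
      · simp [hv]
      · intro b _ hb; simp [hv, hb]
      · simp
    have hRside : ∑ j', ρ j' * (L' j' (v i) * L' j' (v i) * L' j' (w j))
        = ρ j * (L' j (v i) * L' j (v i)) := by
      rw [Finset.sum_eq_single j]
      · simp [hw]
      · intro b _ hb; simp [hw, hb]
      · simp
    rw [← hLside, ← hRside]
    exact hQ (v i) (v i) (w j)
  have e3 : ∀ i j, lam i * (L i (w j) * L i (w j)) = ρ j * L' j (v i) := by
    intro i j
    have hLside : ∑ i', lam i' * (L i' (v i) * L i' (w j) * L i' (w j))
        = lam i * (L i (w j) * L i (w j)) := by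
      rw [Finset.sum_eq_single i]
      · simp [hv, mul_assoc]
      · intro b _ hb; simp [hv, hb]
      · simp
    have hRside : ∑ j', ρ j' * (L' j' (v i) * L' j' (w j) * L' j' (w j))
        = ρ j * L' j (v i) := by
      rw [Finset.sum_eq_single j]
      · simp [hw]
      · intro b _ hb; simp [hw, hb]
      · simp
    rw [← hLside, ← hRside]
    exact hQ (v i) (w j) (w j)
  -- entries are 0 or 1
  have ha01 : ∀ i j, L' j (v i) = 0 ∨ L' j (v i) = 1 := by
    intro i j
    have h := mul_left_cancel₀ (hρ j) ((e1 i j).symm.trans (e2 i j))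
    have h3 : L' j (v i) * (L' j (v i) - 1) = 0 := by linear_combination -h
    rcases mul_eq_zero.mp h3 with h0 | h0
    · exact Or.inl h0
    · exact Or.inr (by linarith [sub_eq_zero.mp h0])
  have hb01 : ∀ i j, L i (w j) = 0 ∨ L i (w j) = 1 := by
    intro i j
    have h := mul_left_cancel₀ (hlam i) ((e3 i j).trans (e1 i j).symm)
    have h3 : L i (w j) * (L i (w j) - 1) = 0 := by linear_combination h
    rcases mul_eq_zero.mp h3 with h0 | h0
    · exact Or.inl h0
    · exact Or.inr (by linarith [sub_eq_zero.mp h0])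
  -- representation of L' in terms of L
  have hL'rep : ∀ j y, L' j y = ∑ i, L' j (v i) * L i y := by
    intro j y
    have h := hQ (w j) (w j) y
    have hRside : ∑ j', ρ j' * (L' j' (w j) * L' j' (w j) * L' j' y) = ρ j * L' j y := by
      rw [Finset.sum_eq_single j]
      · simp [hw]
      · intro b _ hb; simp [hw, hb]
      · simp
    rw [hRside] at h
    apply mul_left_cancel₀ (hρ j)
    rw [← h, Finset.mul_sum]
    apply Finset.sum_congr rfl
    intro i _
    have hbb : L i (w j) * L i (w j) = L i (w j) := by
      rcases hb01 i j with h0 | h0 <;> rw [h0] <;> ring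
    calc lam i * (L i (w j) * L i (w j) * L i y)
        = (lam i * L i (w j)) * L i y := by rw [hbb]; ring
      _ = (ρ j * L' j (v i)) * L i y := by rw [e1]
      _ = ρ j * (L' j (v i) * L i y) := by ring
  -- representation of L in terms of L'
  have hLrep : ∀ k y, L k y = ∑ j, L k (w j) * L' j y := by
    intro k y
    have h := congrFun (congrArg (fun (f : (Fin N → ℝ) →ₗ[ℝ] ℝ) => (f : (Fin N → ℝ) → ℝ))
      (hspan k)) y
    simp only [LinearMap.coe_sum, Finset.sum_apply, LinearMap.smul_apply, smul_eq_mul] at h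
    rw [h]
    apply Finset.sum_congr rfl
    intro j _
    have haa : L' j (v k) * L' j (v k) = L' j (v k) := by
      rcases ha01 k j with h0 | h0 <;> rw [h0] <;> ring
    rw [haa]
    have : ρ j * L' j (v k) = lam k * L k (w j) := (e1 k j).symm
    rw [this, inv_mul_cancel_left₀ (hlam k)]
  -- matrix identities
  have hBA : ∀ k i, ∑ j, L k (w j) * L' j (v i) = if k = i then 1 else 0 := by
    intro k i
    rw [← hLrep k (v i)]
    exact hv k i
  have hAB : ∀ j j', ∑ i, L' j (v i) * L i (w j') = if j = j' then 1 else 0 := by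
    intro j j'
    rw [← hL'rep j (w j')]
    exact hw j j'
  have hprod_nonneg : ∀ (i : Fin m') (j j' : Fin m'), 0 ≤ L' j (v i) * L i (w j') := by
    intro i j j'
    rcases ha01 i j with h0 | h0 <;> rcases hb01 i j' with h1 | h1 <;>
      rw [h0, h1] <;> norm_num
  -- existence of a matched index
  have hex : ∀ j, ∃ i, L' j (v i) = 1 ∧ L i (w j) = 1 := by
    intro j
    by_contra hc
    push_neg at hc
    have h0 : ∑ i, L' j (v i) * L i (w j) = 0 := by
      apply Finset.sum_eq_zero
      intro i _
      rcases ha01 i j with h | h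
      · rw [h, zero_mul]
      · rcases hb01 i j with h' | h'
        · rw [h', mul_zero]
        · exact absurd h' (hc i h)
    rw [hAB j j] at h0
    simp at h0
  choose σ hσ1 hσ2 using hex
  -- off-diagonal entries of a vanish
  have hacol : ∀ j i, i ≠ σ j → L' j (v i) = 0 := by
    intro j i hne
    rcases ha01 i j with h | h
    · exact h
    · exfalso
      have h0 := hBA (σ j) i
      rw [if_neg (fun hh => hne hh.symm)] at h0
      have hterm := (Finset.sum_eq_zero_iff_of_nonneg
        (fun j' _ => by
          rcases hb01 (σ j) j' with h1 | h1 <;> rcases ha01 i j' with h2 | h2 <;>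
            rw [h1, h2] <;> norm_num)).mp h0 j (Finset.mem_univ j)
      rw [hσ2 j, one_mul, h] at hterm
      exact one_ne_zero hterm
  -- σ is injective
  have hinj : Function.Injective σ := by
    intro j j' hjj
    by_contra hne
    have h0 := hAB j j'
    rw [if_neg hne] at h0
    have hterm := (Finset.sum_eq_zero_iff_of_nonneg
      (fun i _ => hprod_nonneg i j j')).mp h0 (σ j) (Finset.mem_univ _)
    rw [hσ1 j, one_mul, hjj, hσ2 j'] at hterm
    exact one_ne_zero hterm
  refine ⟨σ, Finite.injective_iff_bijective.mp hinj, fun j => ⟨?_, ?_⟩⟩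
  · apply LinearMap.ext
    intro y
    rw [hL'rep j y, Finset.sum_eq_single (σ j)]
    · rw [hσ1 j, one_mul]
    · intro i _ hne; rw [hacol j i hne, zero_mul]
    · simp
  · have h := e1 (σ j) j
    rw [hσ2 j, hσ1 j, mul_one, mul_one] at h
    exact h.symm

noncomputable def evalL {n : ℕ} (p : MvPolynomial (Fin n) ℝ) (hp : p.IsHomogeneous 1) :
    (Fin n → ℝ) →ₗ[ℝ] ℝ where
  toFun x := eval x p
  map_add' x y := by
    simp only [aux_hom1_eval hp, Pi.add_apply, mul_add, Finset.sum_add_distrib]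
  map_smul' c x := by
    simp only [aux_hom1_eval hp, Pi.smul_apply, smul_eq_mul, RingHom.id_apply, Finset.mul_sum]
    exact Finset.sum_congr rfl fun k _ => by ring

theorem stmt1 (n m m' : ℕ)
    (ℓ : Fin m → MvPolynomial (Fin n) ℝ) (lam : Fin m → ℝ)
    (hℓ : ∀ i, (ℓ i).IsHomogeneous 1) (hli : LinearIndependent ℝ ℓ)
    (hlam : ∀ i, lam i ≠ 0)
    (l : Fin m' → MvPolynomial (Fin n) ℝ) (ρ : Fin m' → ℝ)
    (hl : ∀ j, (l j).IsHomogeneous 1) (hρ : ∀ j, ρ j ≠ 0)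
    (h2 : ∑ i, lam i • ℓ i ^ 2 = ∑ j, ρ j • l j ^ 2)
    (h3 : ∑ i, lam i • ℓ i ^ 3 = ∑ j, ρ j • l j ^ 3) :
    m ≤ m' ∧ (m' = m →
      Multiset.map (fun j => (l j, ρ j)) Finset.univ.val
        = Multiset.map (fun i => (ℓ i, lam i)) Finset.univ.val) := by
  -- pointwise identities
  have hpt2 : ∀ u : Fin n → ℝ, ∑ i, lam i * (eval u (ℓ i))^2 = ∑ j, ρ j * (eval u (l j))^2 := by
    intro u
    have := congrArg (eval u) h2
    simpa [smul_eval] using this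
  have hpt3 : ∀ u : Fin n → ℝ, ∑ i, lam i * (eval u (ℓ i))^3 = ∑ j, ρ j * (eval u (l j))^3 := by
    intro u
    have := congrArg (eval u) h3
    simpa [smul_eval] using this
  -- polarized identities
  have hB : ∀ x y : Fin n → ℝ, ∑ i, lam i * (eval x (ℓ i) * eval y (ℓ i))
      = ∑ j, ρ j * (eval x (l j) * eval y (l j)) := by
    intro x y
    have E : ∀ s : ℝ, ∑ i, lam i * (eval x (ℓ i) + s * eval y (ℓ i))^2
        = ∑ j, ρ j * (eval x (l j) + s * eval y (l j))^2 := by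
      intro s
      have := hpt2 (x + s • y)
      simpa only [aux_hom1_comb2 (hℓ _) x y s, aux_hom1_comb2 (hl _) x y s] using this
    have sideL : (∑ i, lam i * (eval x (ℓ i) + (1:ℝ) * eval y (ℓ i))^2)
        - (∑ i, lam i * (eval x (ℓ i) + (-1:ℝ) * eval y (ℓ i))^2)
        = 4 * ∑ i, lam i * (eval x (ℓ i) * eval y (ℓ i)) := by
      rw [Finset.mul_sum, ← Finset.sum_sub_distrib]
      exact Finset.sum_congr rfl fun i _ => by ring
    have sideR : (∑ j, ρ j * (eval x (l j) + (1:ℝ) * eval y (l j))^2)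
        - (∑ j, ρ j * (eval x (l j) + (-1:ℝ) * eval y (l j))^2)
        = 4 * ∑ j, ρ j * (eval x (l j) * eval y (l j)) := by
      rw [Finset.mul_sum, ← Finset.sum_sub_distrib]
      exact Finset.sum_congr rfl fun j _ => by ring
    have h4 : (4:ℝ) * (∑ i, lam i * (eval x (ℓ i) * eval y (ℓ i)))
        = 4 * ∑ j, ρ j * (eval x (l j) * eval y (l j)) := by
      rw [← sideL, ← sideR, E 1, E (-1)]
    exact mul_left_cancel₀ (by norm_num) h4
  have hQ : ∀ x y z : Fin n → ℝ, ∑ i, lam i * (eval x (ℓ i) * eval y (ℓ i) * eval z (ℓ i))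
      = ∑ j, ρ j * (eval x (l j) * eval y (l j) * eval z (l j)) := by
    intro x y z
    have E : ∀ s t : ℝ, ∑ i, lam i * (eval x (ℓ i) + s * eval y (ℓ i) + t * eval z (ℓ i))^3
        = ∑ j, ρ j * (eval x (l j) + s * eval y (l j) + t * eval z (l j))^3 := by
      intro s t
      have := hpt3 (x + s • y + t • z)
      simpa only [aux_hom1_comb3 (hℓ _) x y z s t, aux_hom1_comb3 (hl _) x y z s t] using this
    have sideL : (∑ i, lam i * (eval x (ℓ i) + (1:ℝ) * eval y (ℓ i) + (1:ℝ) * eval z (ℓ i))^3)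
        - (∑ i, lam i * (eval x (ℓ i) + (1:ℝ) * eval y (ℓ i) + (-1:ℝ) * eval z (ℓ i))^3)
        - (∑ i, lam i * (eval x (ℓ i) + (-1:ℝ) * eval y (ℓ i) + (1:ℝ) * eval z (ℓ i))^3)
        + (∑ i, lam i * (eval x (ℓ i) + (-1:ℝ) * eval y (ℓ i) + (-1:ℝ) * eval z (ℓ i))^3)
        = 24 * ∑ i, lam i * (eval x (ℓ i) * eval y (ℓ i) * eval z (ℓ i)) := by
      rw [Finset.mul_sum, ← Finset.sum_sub_distrib, ← Finset.sum_sub_distrib,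
        ← Finset.sum_add_distrib]
      exact Finset.sum_congr rfl fun i _ => by ring
    have sideR : (∑ j, ρ j * (eval x (l j) + (1:ℝ) * eval y (l j) + (1:ℝ) * eval z (l j))^3)
        - (∑ j, ρ j * (eval x (l j) + (1:ℝ) * eval y (l j) + (-1:ℝ) * eval z (l j))^3)
        - (∑ j, ρ j * (eval x (l j) + (-1:ℝ) * eval y (l j) + (1:ℝ) * eval z (l j))^3)
        + (∑ j, ρ j * (eval x (l j) + (-1:ℝ) * eval y (l j) + (-1:ℝ) * eval z (l j))^3)
        = 24 * ∑ j, ρ j * (eval x (l j) * eval y (l j) * eval z (l j)) := by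
      rw [Finset.mul_sum, ← Finset.sum_sub_distrib, ← Finset.sum_sub_distrib,
        ← Finset.sum_add_distrib]
      exact Finset.sum_congr rfl fun j _ => by ring
    have h24 : (24:ℝ) * (∑ i, lam i * (eval x (ℓ i) * eval y (ℓ i) * eval z (ℓ i)))
        = 24 * ∑ j, ρ j * (eval x (l j) * eval y (l j) * eval z (l j)) := by
      rw [← sideL, ← sideR, E 1 1, E 1 (-1), E (-1) 1, E (-1) (-1)]
    exact mul_left_cancel₀ (by norm_num) h24
  -- bundled linear maps
  set L : Fin m → ((Fin n → ℝ) →ₗ[ℝ] ℝ) := fun i => evalL (ℓ i) (hℓ i) with hLdef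
  set L' : Fin m' → ((Fin n → ℝ) →ₗ[ℝ] ℝ) := fun j => evalL (l j) (hl j) with hL'def
  -- transfer linear independence
  have hφinj : Function.Injective
      (fun (p : MvPolynomial (Fin n) ℝ) => fun u : Fin n → ℝ => eval u p) := by
    intro p q h
    exact MvPolynomial.funext fun u => congrFun h u
  let φ : MvPolynomial (Fin n) ℝ →ₗ[ℝ] ((Fin n → ℝ) → ℝ) :=
    { toFun := fun p u => eval u p
      map_add' := fun p q => by funext u; simp
      map_smul' := fun c p => by funext u; simp [smul_eval] }
  have hLi : LinearIndependent ℝ L := by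
    have h1 : LinearIndependent ℝ (φ ∘ ℓ) :=
      hli.map' φ (LinearMap.ker_eq_bot.mpr hφinj)
    have heq : φ ∘ ℓ = (LinearMap.ltoFun ℝ (Fin n → ℝ) ℝ ℝ) ∘ L := by
      funext i u; rfl
    rw [heq] at h1
    exact LinearIndependent.of_comp (LinearMap.ltoFun ℝ (Fin n → ℝ) ℝ ℝ) h1
  obtain ⟨hineq, hperm⟩ := aux_core L lam hLi hlam L' ρ hρ hB hQ
  refine ⟨hineq, ?_⟩
  intro hm
  obtain ⟨σ, hbij, hσ⟩ := hperm hm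
  have hmap : ∀ j, l j = ℓ (σ j) := by
    intro j
    apply MvPolynomial.funext
    intro u
    exact congrFun (congrArg (LinearMap.ltoFun ℝ (Fin n → ℝ) ℝ ℝ) (hσ j).1) u
  have hfe : (fun j => (l j, ρ j)) = (fun i => (ℓ i, lam i)) ∘ σ := by
    funext j
    simp [hmap j, (hσ j).2, Function.comp]
  rw [hfe, ← Multiset.map_map]
  congr 1
  exact (Multiset.bijective_iff_map_univ_eq_univ σ).mp hbij
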